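/- For every x ∈ c_c and every sufficiently large n ∈ ℕ, one has f(x + (2/n)·e_n) − f(x) ≥ 1/4, where e_n is the n-th standard unit sequence, while ‖(2/n)·e_n‖ → 0 as n → ∞. -/

import Mathlib

open scoped ENNReal

noncomputable section

abbrev ell2 : Type := lp (fun _ : ℕ => ℝ) 2

lemma memℓp_of_finite_support {x : ℕ → ℝ} (h : (Function.support x).Finite) :
    Memℓp x 2 := by
  apply memℓp_gen
  apply summable_of_finite_support
  refine h.subset ?_
  intro n hn
  simp only [Function.mem_support] at hn ⊢
  intro h0
  exact hn (by simp [h0])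

def ccSubmodule : Submodule ℝ ell2 where
  carrier := {x | (Function.support fun n => (x : ℕ → ℝ) n).Finite}
  add_mem' := by
    intro a b ha hb
    refine Set.Finite.subset (ha.union hb) ?_
    intro n hn
    simp only [Function.mem_support, Set.mem_union] at hn ⊢
    by_contra h
    push_neg at h
    exact hn (by simp [lp.coeFn_add, h.1, h.2])
  zero_mem' := by
    simp only [Set.mem_setOf_eq]
    convert Set.finite_empty
    ext n
    simp [lp.coeFn_zero]
  smul_mem' := by
    intro c a ha
    refine Set.Finite.subset ha ?_
    intro n hn
    simp only [Function.mem_support] at hn ⊢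
    intro h
    exact hn (by simp [lp.coeFn_smul, h])

abbrev cc : Type := ccSubmodule

def seqOf (x : cc) : ℕ → ℝ := fun n => ((x : ell2) : ℕ → ℝ) n

def fSeq (x : ℕ → ℝ) : ℝ :=
  ∑' n : ℕ, (((n : ℝ) + 1) ^ 2 / 2) * (x n - (((n : ℝ) + 1) ^ 2)⁻¹) ^ 2

def fcc (x : cc) : ℝ := fSeq (seqOf x)

/-- The standard unit sequence `e_n` as an element of `c_c`. -/
def eVec (n : ℕ) : cc :=
  ⟨lp.single 2 n (1 : ℝ), by
    refine Set.Finite.subset (Set.finite_singleton n) ?_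
    intro m hm
    simp only [Function.mem_support] at hm
    by_contra hmn
    exact hm (lp.single_apply_ne 2 n _ (by simpa using hmn))⟩

/-- The backward-difference operation on raw sequences, with `x_{-1} := 0`. -/
def Aseq (x : ℕ → ℝ) : ℕ → ℝ := fun n => x n - (if n = 0 then 0 else x (n - 1))

lemma support_Aseq {x : ℕ → ℝ} (h : (Function.support x).Finite) :
    (Function.support (Aseq x)).Finite := by
  refine Set.Finite.subset (h.union (h.image (· + 1))) ?_
  intro n hn
  simp only [Function.mem_support, Aseq] at hn
  by_contra hc
  simp only [Set.mem_union, Function.mem_support, Set.mem_image, not_or, not_exists] at hc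
  obtain ⟨h1, h2⟩ := hc
  apply hn
  rcases n with _ | m
  · simpa using h1
  · have hx1 : x (m + 1) = 0 := not_not.mp h1
    have hx : x m = 0 := by
      by_contra hxm
      exact (h2 m ⟨hxm, rfl⟩).elim
    simp [hx1, hx]

lemma mem_ccSubmodule_of_mk {x : ℕ → ℝ} (hx : Memℓp x 2)
    (h : (Function.support x).Finite) : (⟨x, hx⟩ : ell2) ∈ ccSubmodule := h

/-- The operator `A : c_c → c_c`, `(Ax)_n = x_n - x_{n-1}` (with `x_{-1} := 0`). -/
def Aop (x : cc) : cc :=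
  ⟨⟨Aseq (seqOf x), memℓp_of_finite_support (support_Aseq x.2)⟩,
    mem_ccSubmodule_of_mk _ (support_Aseq x.2)⟩

/-- The Fenchel conjugate of `f`, as a function on `ℓ²`. -/
def fstar (y : ell2) : ℝ :=
  ∑' n : ℕ, (((n : ℝ) + 1) ^ 2)⁻¹ *
    ((1 / 2) * ((y : ℕ → ℝ) n) ^ 2 + (y : ℕ → ℝ) n)

/-- The (formal) adjoint of `A`, acting on `ℓ²` sequences:
`(A*y)_n = y_n - y_{n+1}`. -/
def AstarSeq (y : ell2) : ℕ → ℝ := fun n => (y : ℕ → ℝ) n - (y : ℕ → ℝ) (n + 1)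

/-- for every `x` and all large `n`,
`f (x + (2/n) e_n) - f x ≥ 1/4`, while `‖(2/n) e_n‖ → 0`.
(Here the index `n : ℕ` corresponds to the paper's `n + 1`.) -/
lemma summable_base : Summable (fun n : ℕ => (1/2 : ℝ) * (((n:ℝ)+1)^2)⁻¹) := by
  apply Summable.mul_left
  have := Real.summable_one_div_nat_pow.mpr (le_refl 2)
  have h := (summable_nat_add_iff 1).mpr this
  refine h.congr fun n => ?_
  push_cast
  rw [one_div]

lemma summable_term (x : cc) :
    Summable (fun n : ℕ => (((n:ℝ)+1)^2/2) * (seqOf x n - (((n:ℝ)+1)^2)⁻¹)^2) := by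
  have hfin : (Function.support fun n : ℕ =>
      (((n:ℝ)+1)^2/2) * (seqOf x n - (((n:ℝ)+1)^2)⁻¹)^2
        - (1/2 : ℝ) * (((n:ℝ)+1)^2)⁻¹).Finite := by
    refine Set.Finite.subset x.2 ?_
    intro n hn
    simp only [Function.mem_support] at hn ⊢
    intro h0
    apply hn
    have hne : ((n:ℝ)+1)^2 ≠ 0 := by positivity
    rw [show seqOf x n = 0 from h0]
    field_simp
    ring
  have h1 : Summable _ := summable_of_finite_support hfin
  have := h1.add summable_base
  refine this.congr fun n => ?_
  ring

lemma seq_add_smul (x : cc) (c : ℝ) (n m : ℕ) :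
    seqOf (x + c • eVec n) m = seqOf x m + c * (if m = n then 1 else 0) := by
  simp only [seqOf, eVec, Submodule.coe_add, Submodule.coe_smul]
  rw [lp.coeFn_add, lp.coeFn_smul]
  simp only [Pi.add_apply, Pi.smul_apply, smul_eq_mul]
  congr 1
  congr 1
  rw [lp.single_apply]
  split <;> simp_all

theorem f_jump_along_null_sequence :
    (∀ x : cc, ∃ N : ℕ, ∀ n ≥ N,
      fcc (x + (2 / ((n : ℝ) + 1)) • eVec n) - fcc x ≥ 1 / 4) ∧
    Filter.Tendsto (fun n : ℕ => ‖(2 / ((n : ℝ) + 1)) • eVec n‖)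
      Filter.atTop (nhds 0) := by
  constructor
  · intro x
    obtain ⟨B, hB⟩ := x.2.bddAbove
    refine ⟨B + 1, fun n hn => ?_⟩
    have hx0 : seqOf x n = 0 := by
      by_contra h
      have := hB (Function.mem_support.mpr h)
      omega
    set c : ℝ := 2 / ((n : ℝ) + 1) with hc
    set t : ℝ := (n : ℝ) + 1 with hT
    have ht2 : (2 : ℝ) ≤ t := by
      have : (1 : ℕ) ≤ n := by omega
      have : (1 : ℝ) ≤ (n : ℝ) := by exact_mod_cast this
      simp only [hT]; linarith
    have ht0 : t ≠ 0 := by linarith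
    set F : ℕ → ℝ := fun m =>
      (((m:ℝ)+1)^2/2) * (seqOf (x + c • eVec n) m - (((m:ℝ)+1)^2)⁻¹)^2 with hF
    set G : ℕ → ℝ := fun m =>
      (((m:ℝ)+1)^2/2) * (seqOf x m - (((m:ℝ)+1)^2)⁻¹)^2 with hG
    have hFs : Summable F := summable_term _
    have hGs : Summable G := summable_term _
    have heq : ∀ m, m ≠ n → F m = G m := by
      intro m hm
      simp only [hF, hG, seq_add_smul, if_neg hm, mul_zero, add_zero]
    have hdiff : fcc (x + c • eVec n) - fcc x = F n - G n := by
      have h1 := Summable.tsum_eq_add_tsum_ite hFs n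
      have h2 := Summable.tsum_eq_add_tsum_ite hGs n
      have h3 : (∑' m, if m = n then 0 else F m) = ∑' m, if m = n then 0 else G m := by
        congr 1; ext m; split
        · rfl
        · exact heq m (by assumption)
      simp only [fcc, fSeq]
      rw [show (∑' m : ℕ, (((m:ℝ)+1)^2/2) * (seqOf (x + c • eVec n) m - (((m:ℝ)+1)^2)⁻¹)^2)
          = ∑' m, F m from rfl,
        show (∑' m : ℕ, (((m:ℝ)+1)^2/2) * (seqOf x m - (((m:ℝ)+1)^2)⁻¹)^2) = ∑' m, G m from rfl,
        h1, h2, h3]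
      ring
    rw [hdiff]
    have hFn : F n = (t^2/2) * (c - (t^2)⁻¹)^2 := by
      simp [hF, seq_add_smul, hx0, hT]
    have hGn : G n = (t^2/2) * (0 - (t^2)⁻¹)^2 := by
      simp [hG, hx0, hT]
    have key : (t^2/2) * (c - (t^2)⁻¹)^2 - (t^2/2) * (0 - (t^2)⁻¹)^2 = 2 - 2/t := by
      simp only [hc, hT]
      field_simp
      ring
    rw [hFn, hGn, key]
    have : 2 / t ≤ 1 := by
      rw [div_le_one (by linarith)]; linarith
    linarith
  · have hnorm : ∀ n : ℕ, ‖(2 / ((n : ℝ) + 1)) • eVec n‖ = 2 / ((n : ℝ) + 1) := by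
      intro n
      have h1 : ‖(2 / ((n : ℝ) + 1)) • eVec n‖
          = ‖(2 / ((n : ℝ) + 1)) • (eVec n : ell2)‖ := rfl
      rw [h1, norm_smul]
      have h2 : ‖(eVec n : ell2)‖ = 1 := by
        have := lp.norm_single (p := 2) (E := fun _ : ℕ => ℝ) (by norm_num)
          n (1 : ℝ)
        simpa [eVec] using this
      rw [h2, mul_one]
      rw [Real.norm_eq_abs, abs_of_nonneg (by positivity)]
    simp only [hnorm]
    have := tendsto_one_div_add_atTop_nhds_zero_nat.const_mul (2 : ℝ)
    simpa [div_eq_mul_inv, one_div, mul_comm] using this
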